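/- Let φ : ℝ → ℝ be a function, τ > 0, and let η be a real random variable such that E exp(λ η) ≤ exp(φ(λ τ)) for all λ ∈ ℝ. Define φ̄(λ) = sup_{n ≥ 1} n · φ(λ/√n). Then for independent copies (η_i) of η, for every n ≥ 1 and every λ ∈ ℝ: E exp( λ · n^{−1/2} ∑_{i=1}^n η_i ) ≤ exp( φ̄(λ τ) ). Equivalently, ‖n^{−1/2} ∑_{i=1}^n η_i‖_{B(φ̄)} ≤ ‖η‖_{B(φ)}, so B(φ) is a weak normal rearrangement invariant space with CLT(B(φ)) = B(φ̄). -/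

import Mathlib

open MeasureTheory ProbabilityTheory ENNReal Finset

/-- if `E exp(λη) ≤ exp(φ(λτ))` for all `λ`, then for independent copies
`(ηᵢ)` of `η` and all `n ≥ 1`, `λ`:
`E exp(λ n^{-1/2} ∑ηᵢ) ≤ exp(φ̄(λτ))`, where `φ̄(λ) = sup_{m ≥ 1} m φ(λ/√m)` (the
supremum over positive integers, here rendered as the supremum in `ℝ≥0∞` of
`exp(m φ(λτ/√m))`, which equals `exp(φ̄(λτ))`). Thus `B(φ)` is a weak normal
rearrangement invariant space with `CLT(B(φ)) = B(φ̄)`. -/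
theorem stmt_11 {Ω : Type*} [MeasurableSpace Ω] (P : Measure Ω) [IsProbabilityMeasure P]
    (φ : ℝ → ℝ) (τ : ℝ) (hτ : 0 < τ) (η : Ω → ℝ) (hmeas : Measurable η)
    (hmgf : ∀ l : ℝ,
      ∫⁻ ω, ENNReal.ofReal (Real.exp (l * η ω)) ∂P
        ≤ ENNReal.ofReal (Real.exp (φ (l * τ))))
    (ηs : ℕ → Ω → ℝ) (hmeas' : ∀ i, Measurable (ηs i))
    (hindep : iIndepFun ηs P)
    (hcopy : ∀ i, IdentDistrib (ηs i) η P P)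
    (n : ℕ) (hn : 1 ≤ n) (l : ℝ) :
    ∫⁻ ω, ENNReal.ofReal
        (Real.exp (l * ((∑ i ∈ Finset.range n, ηs i ω) / Real.sqrt n))) ∂P
      ≤ ⨆ (m : ℕ) (_ : 1 ≤ m),
          ENNReal.ofReal (Real.exp ((m : ℝ) * φ (l * τ / Real.sqrt m))) := by
  set t : ℝ := l / Real.sqrt n with ht
  have hmeasG : Measurable fun x : ℝ => ENNReal.ofReal (Real.exp (t * x)) :=
    ENNReal.measurable_ofReal.comp (Real.measurable_exp.comp (measurable_const_mul t))
  -- lintegral of each copy equals that of η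
  have hlint_i : ∀ i, ∫⁻ ω, ENNReal.ofReal (Real.exp (t * ηs i ω)) ∂P
      = ∫⁻ ω, ENNReal.ofReal (Real.exp (t * η ω)) ∂P := fun i =>
    ((hcopy i).comp hmeasG).lintegral_eq
  -- integrability of exp(t * ηs i)
  have h_int : ∀ i, Integrable (fun ω => Real.exp (t * ηs i ω)) P := by
    intro i
    refine ⟨(((hmeas' i).const_mul t).exp).aestronglyMeasurable, ?_⟩
    rw [hasFiniteIntegral_iff_ofReal (Filter.Eventually.of_forall fun ω => (Real.exp_pos _).le)]
    rw [hlint_i i]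
    exact lt_of_le_of_lt (hmgf t) ENNReal.ofReal_lt_top
  have h_int_sum : Integrable (fun ω => Real.exp (t * (∑ i ∈ Finset.range n, ηs i) ω)) P :=
    hindep.integrable_exp_mul_sum hmeas' (fun i _ => h_int i)
  have key : ∫⁻ ω, ENNReal.ofReal
      (Real.exp (l * ((∑ i ∈ Finset.range n, ηs i ω) / Real.sqrt n))) ∂P
      ≤ ENNReal.ofReal (Real.exp ((n : ℝ) * φ (l * τ / Real.sqrt n))) := by
    calc _ = ∫⁻ ω, ENNReal.ofReal
            (Real.exp (t * (∑ i ∈ Finset.range n, ηs i) ω)) ∂P := by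
          refine lintegral_congr fun ω => ?_
          simp only [Finset.sum_apply]
          rw [ht]
          ring_nf
      _ = ENNReal.ofReal (mgf (∑ i ∈ Finset.range n, ηs i) P t) :=
          (ofReal_integral_eq_lintegral_ofReal h_int_sum
            (Filter.Eventually.of_forall fun ω => (Real.exp_pos _).le)).symm
      _ = ENNReal.ofReal (∏ i ∈ Finset.range n, mgf (ηs i) P t) := by
          rw [hindep.mgf_sum hmeas']
      _ = ∏ i ∈ Finset.range n, ENNReal.ofReal (mgf (ηs i) P t) :=
          ENNReal.ofReal_prod_of_nonneg fun i _ => mgf_nonneg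
      _ ≤ ∏ i ∈ Finset.range n, ENNReal.ofReal (Real.exp (φ (t * τ))) := by
          refine Finset.prod_le_prod' fun i _ => ?_
          rw [mgf, ofReal_integral_eq_lintegral_ofReal (h_int i)
            (Filter.Eventually.of_forall fun ω => (Real.exp_pos _).le), hlint_i i]
          exact hmgf t
      _ = ENNReal.ofReal (Real.exp (φ (t * τ)) ^ n) := by
          rw [Finset.prod_const, Finset.card_range,
            ENNReal.ofReal_pow (Real.exp_pos _).le]
      _ = ENNReal.ofReal (Real.exp ((n : ℝ) * φ (l * τ / Real.sqrt n))) := by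
          rw [← Real.exp_nat_mul]
          congr 2
          rw [ht]
          ring
  refine key.trans ?_
  exact le_iSup₂ (f := fun (m : ℕ) (_ : 1 ≤ m) =>
    ENNReal.ofReal (Real.exp ((m : ℝ) * φ (l * τ / Real.sqrt m)))) n hn
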